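/- Let (W,S) be a Coxeter system, I ⊆ S with W_I finite, I° = { s ∈ I : L(s)=0 }, I⁺ = I \ I°, and let w°_I be the minimal-length element of the coset W_{I°} w_I where w_I is the longest element of W_I. Then for every a ∈ W_{I°} and every t ∈ I⁺, we have t·(a w°_I) < a w°_I in Bruhat order (equivalently ℓ(t a w°_I) < ℓ(a w°_I)). -/

import Mathlib

set_option linter.unusedSectionVars false
set_option linter.unusedVariables false


namespace Stmt17

variable {B W Γ : Type*} [Group W] [AddCommGroup Γ] [LinearOrder Γ] [IsOrderedAddMonoid Γ]
variable {M : CoxeterMatrix B} (cs : CoxeterSystem M W)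

/-- The standard parabolic subgroup `W_I`. -/
def par (I : Set B) : Subgroup W := Subgroup.closure (cs.simple '' I)

open CoxeterSystem List

section Eta

variable {B W : Type*} [Group W] {M : CoxeterMatrix B} (cs : CoxeterSystem M W)

local prefix:100 "π" => cs.wordProd

open Classical in
noncomputable def chi (u v : W) : ZMod 2 := if u = v then 1 else 0

lemma chi_pos {u v : W} (h : u = v) : chi u v = 1 := by simp [chi, h]

lemma chi_neg {u v : W} (h : u ≠ v) : chi u v = 0 := by simp [chi, h]

lemma chi_congr {u v u' v' : W} (h : (u = v) ↔ (u' = v')) : chi u v = chi u' v' := by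
  by_cases hu : u = v
  · rw [chi_pos hu, chi_pos (h.mp hu)]
  · rw [chi_neg hu, chi_neg fun hc => hu (h.mpr hc)]

lemma zmod2_cases (x : ZMod 2) : x = 0 ∨ x = 1 := by
  have : ∀ y : ZMod 2, y = 0 ∨ y = 1 := by decide
  exact this x

lemma zmod2_add_self (x : ZMod 2) : x + x = 0 := by
  rcases zmod2_cases x with h | h <;> rw [h] <;> decide

lemma conj_eq_iff {G : Type*} [Group G] (a u v : G) : a * u * a⁻¹ = v ↔ u = a⁻¹ * v * a := by
  constructor
  · rintro rfl; group
  · rintro rfl; group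

noncomputable def sigma (i : B) : Equiv.Perm (W × ZMod 2) :=
  Function.Involutive.toPerm
    (fun p => (cs.simple i * p.1 * cs.simple i, p.2 + chi p.1 (cs.simple i)))
    (by
      intro p
      have h1 : cs.simple i * (cs.simple i * p.1 * cs.simple i) * cs.simple i = p.1 := by
        rw [mul_assoc (cs.simple i) p.1, cs.simple_mul_simple_cancel_left,
          cs.simple_mul_simple_cancel_right]
      have h2 : chi (cs.simple i * p.1 * cs.simple i) (cs.simple i) = chi p.1 (cs.simple i) := by
        apply chi_congr
        rw [show cs.simple i * p.1 * cs.simple i = cs.simple i * p.1 * (cs.simple i)⁻¹ by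
          rw [cs.inv_simple], conj_eq_iff]
        rw [cs.inv_simple, mul_assoc, cs.simple_mul_simple_self, mul_one]
      dsimp only
      rw [h1, h2, add_assoc, zmod2_add_self, add_zero])

lemma sigma_apply (i : B) (u : W) (ε : ZMod 2) :
    sigma cs i (u, ε) = (cs.simple i * u * cs.simple i, ε + chi u (cs.simple i)) := rfl

lemma sigma_mul_pow_apply (i j : B) (n : ℕ) (u : W) (ε : ZMod 2) :
    ((sigma cs i * sigma cs j) ^ n) (u, ε)
      = ((cs.simple i * cs.simple j) ^ n * u * ((cs.simple i * cs.simple j) ^ n)⁻¹,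
         ε + ∑ l ∈ Finset.range (2 * n),
           chi u (cs.simple j * (cs.simple i * cs.simple j) ^ l)) := by
  induction n generalizing u ε with
  | zero => simp
  | succ n ih =>
    rw [pow_succ, Equiv.Perm.mul_apply, Equiv.Perm.mul_apply, sigma_apply, sigma_apply, ih]
    have hpinv : (cs.simple i * cs.simple j)⁻¹ = cs.simple j * cs.simple i := by
      rw [mul_inv_rev, cs.inv_simple, cs.inv_simple]
    have hconj : cs.simple i * (cs.simple j * u * cs.simple j) * cs.simple i
        = (cs.simple i * cs.simple j) * u * (cs.simple i * cs.simple j)⁻¹ := by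
      rw [hpinv]; simp only [mul_assoc]
    have c1 : chi u (cs.simple j) = chi u (cs.simple j * (cs.simple i * cs.simple j) ^ 0) := by
      rw [pow_zero, mul_one]
    have c2 : chi (cs.simple j * u * cs.simple j) (cs.simple i)
        = chi u (cs.simple j * (cs.simple i * cs.simple j) ^ 1) := by
      apply chi_congr
      rw [show cs.simple j * u * cs.simple j = cs.simple j * u * (cs.simple j)⁻¹ by
        rw [cs.inv_simple], conj_eq_iff, cs.inv_simple, pow_one, mul_assoc]
    have c3 : ∀ l, chi (cs.simple i * (cs.simple j * u * cs.simple j) * cs.simple i)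
        (cs.simple j * (cs.simple i * cs.simple j) ^ l)
        = chi u (cs.simple j * (cs.simple i * cs.simple j) ^ (l + 2)) := by
      intro l
      apply chi_congr
      rw [hconj, conj_eq_iff (cs.simple i * cs.simple j) u]
      have hinv2 : (cs.simple i * cs.simple j)⁻¹ * cs.simple j
          = cs.simple j * (cs.simple i * cs.simple j) := by
        rw [hpinv, mul_assoc]
      have harg : (cs.simple i * cs.simple j)⁻¹ * (cs.simple j * (cs.simple i * cs.simple j) ^ l)
            * (cs.simple i * cs.simple j)
          = cs.simple j * (cs.simple i * cs.simple j) ^ (l + 2) := by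
        rw [← mul_assoc ((cs.simple i * cs.simple j))⁻¹ (cs.simple j) ((cs.simple i * cs.simple j) ^ l), hinv2, mul_assoc (cs.simple j), ← pow_succ', mul_assoc, ← pow_succ]
      rw [harg]
    dsimp only
    rw [Prod.mk.injEq]
    constructor
    · rw [hconj, pow_succ]
      simp only [mul_inv_rev, mul_assoc, cs.inv_simple]
    · have hsum : ∑ l ∈ Finset.range (2 * n),
          chi (cs.simple i * (cs.simple j * u * cs.simple j) * cs.simple i)
            (cs.simple j * (cs.simple i * cs.simple j) ^ l)
          = ∑ l ∈ Finset.range (2 * n),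
              chi u (cs.simple j * (cs.simple i * cs.simple j) ^ (l + 2)) :=
        Finset.sum_congr rfl fun l _ => c3 l
      rw [hsum, c1, c2,
        show 2 * (n + 1) = (2 * n + 1) + 1 by ring, Finset.sum_range_succ',
        Finset.sum_range_succ']
      simp only [Nat.zero_add]
      have h12 : ∀ l : ℕ, l + 1 + 1 = l + 2 := fun l => by omega
      simp only [h12]
      abel

lemma sigma_liftable : M.IsLiftable (sigma cs) := by
  intro i j
  apply Equiv.ext
  rintro ⟨u, ε⟩
  rw [sigma_mul_pow_apply, cs.simple_mul_simple_pow]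
  have hsum : ∑ l ∈ Finset.range (2 * M i j),
      chi u (cs.simple j * (cs.simple i * cs.simple j) ^ l) = 0 := by
    rw [two_mul, Finset.sum_range_add]
    have he : ∀ l, chi u (cs.simple j * (cs.simple i * cs.simple j) ^ (M i j + l))
        = chi u (cs.simple j * (cs.simple i * cs.simple j) ^ l) := by
      intro l
      rw [pow_add, cs.simple_mul_simple_pow, one_mul]
    simp only [he]
    exact zmod2_add_self _
  rw [hsum]
  simp


noncomputable def phi : W →* Equiv.Perm (W × ZMod 2) := cs.lift ⟨sigma cs, sigma_liftable cs⟩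

noncomputable def eta (w u : W) : ZMod 2 := (phi cs w (u, 0)).2

lemma phi_simple (i : B) : phi cs (cs.simple i) = sigma cs i :=
  cs.lift_apply_simple (sigma_liftable cs) i

lemma phi_word_fst (ω : List B) (u : W) (ε : ZMod 2) :
    (phi cs (π ω) (u, ε)).1 = (π ω) * u * (π ω)⁻¹ := by
  induction ω generalizing u ε with
  | nil => simp [phi]
  | cons i ω ih =>
    rw [cs.wordProd_cons, map_mul, Equiv.Perm.mul_apply, phi_simple]
    have : phi cs (π ω) (u, ε) = ((phi cs (π ω) (u, ε)).1, (phi cs (π ω) (u, ε)).2) := rfl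
    rw [this, sigma_apply, ih]
    simp only [mul_inv_rev, cs.inv_simple, mul_assoc]

lemma phi_word_snd (ω : List B) (u : W) (ε : ZMod 2) :
    (phi cs (π ω) (u, ε)).2 = ε + (phi cs (π ω) (u, 0)).2 := by
  induction ω generalizing u ε with
  | nil => simp [phi]
  | cons i ω ih =>
    rw [cs.wordProd_cons, map_mul, Equiv.Perm.mul_apply, Equiv.Perm.mul_apply, phi_simple]
    have h1 : phi cs (π ω) (u, ε) = ((phi cs (π ω) (u, ε)).1, (phi cs (π ω) (u, ε)).2) := rfl
    have h2 : phi cs (π ω) (u, 0) = ((phi cs (π ω) (u, 0)).1, (phi cs (π ω) (u, 0)).2) := rfl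
    rw [h1, h2, sigma_apply, sigma_apply]
    dsimp only
    rw [phi_word_fst, phi_word_fst, ih u ε]
    abel

lemma phi_apply (w u : W) (ε : ZMod 2) :
    phi cs w (u, ε) = (w * u * w⁻¹, ε + eta cs w u) := by
  obtain ⟨ω, _, rfl⟩ := cs.exists_reduced_word w
  have h1 : phi cs (π ω) (u, ε) = ((phi cs (π ω) (u, ε)).1, (phi cs (π ω) (u, ε)).2) := rfl
  rw [h1, phi_word_fst, phi_word_snd]
  rfl

lemma eta_one (u : W) : eta cs 1 u = 0 := by simp [eta, phi]

lemma eta_simple (i : B) (u : W) : eta cs (cs.simple i) u = chi u (cs.simple i) := by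
  rw [eta, phi_simple, sigma_apply]
  simp

lemma eta_mul (w₁ w₂ u : W) :
    eta cs (w₁ * w₂) u = eta cs w₂ u + eta cs w₁ (w₂ * u * w₂⁻¹) := by
  have : phi cs (w₁ * w₂) (u, 0) = phi cs w₁ (phi cs w₂ (u, 0)) := by
    rw [map_mul, Equiv.Perm.mul_apply]
  rw [eta, this, phi_apply cs w₂ u 0, phi_apply cs w₁]
  simp

lemma eta_mem {ω : List B} {u : W} (h : eta cs (π ω) u = 1) : u ∈ cs.rightInvSeq ω := by
  induction ω generalizing u with
  | nil =>
    rw [cs.wordProd_nil, eta_one] at h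
    exact absurd h (by decide)
  | cons i ω ih =>
    rw [cs.wordProd_cons, eta_mul, eta_simple] at h
    show u ∈ (π ω)⁻¹ * cs.simple i * (π ω) :: cs.rightInvSeq ω
    by_cases hc : π ω * u * (π ω)⁻¹ = cs.simple i
    · rw [conj_eq_iff] at hc
      rw [hc]
      exact List.mem_cons_self
    · rw [chi_neg hc, add_zero] at h
      exact List.mem_cons_of_mem _ (ih h)

lemma eta_of_mem {ω : List B} (hω : cs.IsReduced ω) {u : W} (h : u ∈ cs.rightInvSeq ω) :
    eta cs (π ω) u = 1 := by
  induction ω generalizing u with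
  | nil => simp at h
  | cons i ω ih =>
    have hred : cs.IsReduced ω := by
      have := hω.drop 1
      simpa using this
    have hnodup := hω.nodup_rightInvSeq
    have hhead : (π ω)⁻¹ * cs.simple i * (π ω) ∉ cs.rightInvSeq ω := by
      have : cs.rightInvSeq (i :: ω) = (π ω)⁻¹ * cs.simple i * (π ω) :: cs.rightInvSeq ω := rfl
      rw [this, List.nodup_cons] at hnodup
      exact hnodup.1
    rw [cs.wordProd_cons, eta_mul, eta_simple]
    rcases List.mem_cons.mp h with rfl | hmem
    · have hc : π ω * ((π ω)⁻¹ * cs.simple i * (π ω)) * (π ω)⁻¹ = cs.simple i := by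
        rw [conj_eq_iff]
      rw [chi_pos hc]
      have : eta cs (π ω) ((π ω)⁻¹ * cs.simple i * (π ω)) = 0 := by
        rcases zmod2_cases (eta cs (π ω) ((π ω)⁻¹ * cs.simple i * (π ω))) with h0 | h1
        · exact h0
        · exact absurd (eta_mem cs h1) hhead
      rw [this, zero_add]
    · have hc : π ω * u * (π ω)⁻¹ ≠ cs.simple i := by
        intro hc
        rw [conj_eq_iff] at hc
        exact hhead (hc ▸ hmem)
      rw [chi_neg hc, add_zero, ih hred hmem]

lemma eta_refl_self {t : W} (ht : cs.IsReflection t) : eta cs t t = 1 := by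
  obtain ⟨v, k, rfl⟩ := ht
  have e0 : eta cs v (cs.simple k) + eta cs v⁻¹ (v * cs.simple k * v⁻¹) = 0 := by
    have := eta_mul cs v⁻¹ v (cs.simple k)
    rw [inv_mul_cancel, eta_one] at this
    rw [← this]
  have hsplit : v * cs.simple k * v⁻¹ = v * (cs.simple k * v⁻¹) := by
    rw [mul_assoc]
  rw [hsplit, eta_mul, ← hsplit]
  have harg : cs.simple k * v⁻¹ * (v * cs.simple k * v⁻¹) * (cs.simple k * v⁻¹)⁻¹
      = cs.simple k := by
    rw [mul_inv_rev, inv_inv, cs.inv_simple]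
    calc cs.simple k * v⁻¹ * (v * cs.simple k * v⁻¹) * (v * cs.simple k)
        = cs.simple k * (v⁻¹ * v) * cs.simple k * (v⁻¹ * v) * cs.simple k := by
          simp only [mul_assoc]
      _ = cs.simple k := by
          simp [cs.simple_mul_simple_cancel_left]
  rw [harg]
  have e1 : eta cs (cs.simple k * v⁻¹) (v * cs.simple k * v⁻¹)
      = eta cs v⁻¹ (v * cs.simple k * v⁻¹) + 1 := by
    rw [eta_mul]
    have : v⁻¹ * (v * cs.simple k * v⁻¹) * v⁻¹⁻¹ = cs.simple k := by
      rw [inv_inv]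
      simp only [mul_assoc]
      simp [cs.simple_mul_simple_cancel_left, inv_mul_cancel_left]
    rw [this, eta_simple, chi_pos rfl]
  rw [e1]
  have : eta cs v⁻¹ (v * cs.simple k * v⁻¹) + 1 + eta cs v (cs.simple k)
      = (eta cs v (cs.simple k) + eta cs v⁻¹ (v * cs.simple k * v⁻¹)) + 1 := by abel
  rw [this, e0, zero_add]

lemma eta_eq_one_of_isRightInversion {w t : W} (ht : cs.IsReflection t)
    (hlt : cs.length (w * t) < cs.length w) : eta cs w t = 1 := by
  have hw : w = (w * t) * t := by rw [mul_assoc, ht.mul_self, mul_one]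
  have harg : t * t * t⁻¹ = t := by rw [ht.mul_self, one_mul, ht.inv]
  have h0 : eta cs (w * t) t = 0 := by
    rcases zmod2_cases (eta cs (w * t) t) with h | h
    · exact h
    · exfalso
      obtain ⟨α, hαred, hα⟩ := cs.exists_reduced_word' (w * t)
      rw [hα] at h
      have hmem := eta_mem cs h
      have hinv := cs.isRightInversion_of_mem_rightInvSeq hαred hmem
      rw [← hα] at hinv
      have : cs.length ((w * t) * t) < cs.length (w * t) := hinv.2
      rw [mul_assoc, ht.mul_self, mul_one] at this
      omega
  calc eta cs w t = eta cs ((w * t) * t) t := by rw [← hw]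
    _ = eta cs t t + eta cs (w * t) (t * t * t⁻¹) := eta_mul cs _ _ _
    _ = 1 + 0 := by rw [eta_refl_self cs ht, harg, h0]
    _ = 1 := by decide

/-- Strong exchange property (right version). -/
lemma exchange_right {ω : List B} (hω : cs.IsReduced ω) {t : W} (ht : cs.IsReflection t)
    (hlt : cs.length (π ω * t) < cs.length (π ω)) :
    ∃ j < ω.length, π ω * t = π (ω.eraseIdx j) := by
  have h1 : eta cs (π ω) t = 1 := eta_eq_one_of_isRightInversion cs ht hlt
  have h2 : t ∈ cs.rightInvSeq ω := eta_mem cs h1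
  obtain ⟨j, hj, hget⟩ := List.mem_iff_getElem.mp h2
  have hjlen : j < ω.length := by
    have := cs.length_rightInvSeq ω
    omega
  refine ⟨j, hjlen, ?_⟩
  have := cs.wordProd_mul_getD_rightInvSeq ω j
  rw [List.getD_eq_getElem _ _ hj, hget] at this
  exact this

end Eta

section Parab

variable {B W : Type*} [Group W] {M : CoxeterMatrix B} (cs : CoxeterSystem M W)

local prefix:100 "π" => cs.wordProd

/-- The standard parabolic subgroup `W_X` (local copy used by the helper lemmas). -/
def par' (X : Set B) : Subgroup W := Subgroup.closure (cs.simple '' X)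

lemma wordProd_mem_par' {X : Set B} {ω : List B} (h : ∀ j ∈ ω, j ∈ X) : π ω ∈ par' cs X := by
  induction ω with
  | nil => rw [cs.wordProd_nil]; exact one_mem _
  | cons i ω ih =>
    rw [cs.wordProd_cons]
    exact mul_mem (Subgroup.subset_closure ⟨i, h i List.mem_cons_self, rfl⟩)
      (ih fun j hj => h j (List.mem_cons_of_mem _ hj))

lemma par'_exists_word {X : Set B} {x : W} (hx : x ∈ par' cs X) :
    ∃ ω : List B, (∀ j ∈ ω, j ∈ X) ∧ x = π ω := by
  refine Subgroup.closure_induction ?_ ?_ ?_ ?_ hx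
  · rintro y ⟨i, hi, rfl⟩
    exact ⟨[i], by simpa using hi, by simp⟩
  · exact ⟨[], by simp, by simp⟩
  · rintro y z _ _ ⟨ω₁, h1, rfl⟩ ⟨ω₂, h2, rfl⟩
    refine ⟨ω₁ ++ ω₂, ?_, (cs.wordProd_append ω₁ ω₂).symm⟩
    intro j hj
    rcases List.mem_append.mp hj with h | h
    exacts [h1 j h, h2 j h]
  · rintro y _ ⟨ω, h1, rfl⟩
    exact ⟨ω.reverse, fun j hj => h1 j (List.mem_reverse.mp hj),
      (cs.wordProd_reverse ω).symm⟩

lemma exists_reduced_word_par' {X : Set B} {x : W} (hx : x ∈ par' cs X) :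
    ∃ ω : List B, (∀ j ∈ ω, j ∈ X) ∧ cs.IsReduced ω ∧ x = π ω := by
  obtain ⟨ω₀, hmem, rfl⟩ := par'_exists_word cs hx
  suffices h : ∀ n (ω : List B), ω.length ≤ n → (∀ j ∈ ω, j ∈ X) →
      ∃ α, (∀ j ∈ α, j ∈ X) ∧ cs.IsReduced α ∧ π ω = π α by
    obtain ⟨α, h1, h2, h3⟩ := h ω₀.length ω₀ le_rfl hmem
    exact ⟨α, h1, h2, h3⟩
  intro n
  induction n with
  | zero =>
    intro ω hlen _
    have hω : ω = [] := List.length_eq_zero_iff.mp (Nat.le_zero.mp hlen)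
    subst hω
    exact ⟨[], by simp, by simp [CoxeterSystem.IsReduced], rfl⟩
  | succ n ih =>
    intro ω hlen hmemX
    by_cases hred : cs.IsReduced ω
    · exact ⟨ω, hmemX, hred, rfl⟩
    rcases List.eq_nil_or_concat ω with rfl | ⟨ω', k, rfl⟩
    · exact absurd (by simp [CoxeterSystem.IsReduced]) hred
    have hmem' : ∀ j ∈ ω', j ∈ X := fun j hj =>
      hmemX j (by rw [List.concat_eq_append]; exact List.mem_append_left _ hj)
    have hkX : k ∈ X := hmemX k (by rw [List.concat_eq_append]; simp)
    have hlen' : ω'.length + 1 ≤ n + 1 := by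
      rw [← List.length_concat]; exact hlen
    by_cases hred' : cs.IsReduced ω'
    · -- the last letter is a right descent of `π ω'`; use the exchange property
      have hne : cs.length (π ω' * cs.simple k) ≠ ω'.length + 1 := by
        intro h
        apply hred
        show cs.length (π (ω'.concat k)) = (ω'.concat k).length
        rw [cs.wordProd_concat, List.length_concat, h]
      have hlt : cs.length (π ω' * cs.simple k) < cs.length (π ω') := by
        rcases cs.length_mul_simple (π ω') k with h | h
        · exact absurd (by rw [h, hred']) hne
        · omega
      obtain ⟨j, hj, heq⟩ := exchange_right cs hred' (cs.isReflection_simple k) hlt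
      have hmemE : ∀ i ∈ ω'.eraseIdx j, i ∈ X := fun i hi =>
        hmem' i ((List.eraseIdx_sublist ω' j).subset hi)
      have hE : (ω'.eraseIdx j).length + 1 = ω'.length := List.length_eraseIdx_add_one hj
      obtain ⟨α, h1, h2, h3⟩ := ih (ω'.eraseIdx j) (by omega) hmemE
      exact ⟨α, h1, h2, by rw [cs.wordProd_concat, heq, h3]⟩
    · obtain ⟨β, hβX, hβred, hβeq⟩ := ih ω' (by omega) hmem'
      have hβlen : β.length < ω'.length := by
        have h1 : cs.length (π ω') ≤ ω'.length := cs.length_wordProd_le ω'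
        have h2 : cs.length (π ω') ≠ ω'.length := hred'
        have h3 : cs.length (π β) = β.length := hβred
        rw [← hβeq] at h3
        omega
      have hconcX : ∀ i ∈ β.concat k, i ∈ X := by
        intro i hi
        rw [List.concat_eq_append] at hi
        rcases List.mem_append.mp hi with h | h
        · exact hβX i h
        · simp at h; subst h; exact hkX
      obtain ⟨α, h1, h2, h3⟩ := ih (β.concat k) (by rw [List.length_concat]; omega) hconcX
      refine ⟨α, h1, h2, ?_⟩
      rw [cs.wordProd_concat, hβeq, ← h3, cs.wordProd_concat]

lemma exists_leftDescent_par' {X : Set B} {x : W} (hx : x ∈ par' cs X) (hne : x ≠ 1) :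
    ∃ j ∈ X, cs.length (cs.simple j * x) < cs.length x := by
  obtain ⟨ω, hX, hred, rfl⟩ := exists_reduced_word_par' cs hx
  cases ω with
  | nil => exact absurd (cs.wordProd_nil) hne
  | cons j rest =>
    refine ⟨j, hX j List.mem_cons_self, ?_⟩
    have hcan : cs.simple j * π (j :: rest) = π rest := by
      rw [cs.wordProd_cons, cs.simple_mul_simple_cancel_left]
    rw [hcan]
    have h1 : cs.length (π rest) ≤ rest.length := cs.length_wordProd_le rest
    have h2 : cs.length (π (j :: rest)) = rest.length + 1 := by
      rw [hred]; simp
    omega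

/-- Any element of `W_I` all of whose `I`-descents are descents equals the longest element. -/
lemma allDescent_eq (I : Set B) (wI : W) (hwI1 : wI ∈ par' cs I)
    (hwI2 : ∀ v ∈ par' cs I, cs.length v ≤ cs.length wI)
    {z : W} (hz : z ∈ par' cs I)
    (hdesc : ∀ j ∈ I, cs.length (cs.simple j * z) < cs.length z) : z = wI := by
  by_contra hne
  have hu_mem : z * wI⁻¹ ∈ par' cs I := mul_mem hz (inv_mem hwI1)
  have hu_ne : z * wI⁻¹ ≠ 1 := fun h => hne (by rwa [mul_inv_eq_one] at h)
  obtain ⟨j, hjI, hjd⟩ := exists_leftDescent_par' cs hu_mem hu_ne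
  have hzinv : z⁻¹ = wI⁻¹ * (z * wI⁻¹)⁻¹ := by group
  have key : eta cs z⁻¹ (cs.simple j)
      = eta cs (z * wI⁻¹)⁻¹ (cs.simple j)
        + eta cs wI⁻¹ ((z * wI⁻¹)⁻¹ * cs.simple j * (z * wI⁻¹)) := by
    rw [hzinv, eta_mul, inv_inv]
  have h1 : eta cs z⁻¹ (cs.simple j) = 1 := by
    apply eta_eq_one_of_isRightInversion cs (cs.isReflection_simple j)
    have e : z⁻¹ * cs.simple j = (cs.simple j * z)⁻¹ := by
      rw [mul_inv_rev (cs.simple j) z, cs.inv_simple]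
    rw [e, cs.length_inv, cs.length_inv]
    exact hdesc j hjI
  have h3 : eta cs (z * wI⁻¹)⁻¹ (cs.simple j) = 1 := by
    apply eta_eq_one_of_isRightInversion cs (cs.isReflection_simple j)
    have e : (z * wI⁻¹)⁻¹ * cs.simple j = (cs.simple j * (z * wI⁻¹))⁻¹ := by
      rw [mul_inv_rev (cs.simple j) (z * wI⁻¹), cs.inv_simple]
    rw [e, cs.length_inv, cs.length_inv]
    exact hjd
  have ht' : cs.IsReflection ((z * wI⁻¹)⁻¹ * cs.simple j * (z * wI⁻¹)) := by
    have := (cs.isReflection_simple j).conj (z * wI⁻¹)⁻¹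
    rwa [inv_inv] at this
  have ht'mem : (z * wI⁻¹)⁻¹ * cs.simple j * (z * wI⁻¹) ∈ par' cs I :=
    mul_mem (mul_mem (inv_mem hu_mem) (Subgroup.subset_closure ⟨j, hjI, rfl⟩)) hu_mem
  have h2 : eta cs wI⁻¹ ((z * wI⁻¹)⁻¹ * cs.simple j * (z * wI⁻¹)) = 1 := by
    apply eta_eq_one_of_isRightInversion cs ht'
    have e : wI⁻¹ * ((z * wI⁻¹)⁻¹ * cs.simple j * (z * wI⁻¹))
        = (((z * wI⁻¹)⁻¹ * cs.simple j * (z * wI⁻¹)) * wI)⁻¹ := by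
      rw [mul_inv_rev ((z * wI⁻¹)⁻¹ * cs.simple j * (z * wI⁻¹)) wI, ht'.inv]
    rw [e, cs.length_inv, cs.length_inv]
    have hle := hwI2 (((z * wI⁻¹)⁻¹ * cs.simple j * (z * wI⁻¹)) * wI)
      (mul_mem ht'mem hwI1)
    have hne2 := ht'.length_mul_right_ne wI
    omega
  rw [h1, h3, h2] at key
  exact absurd key (by decide)

end Parab

section Weight

variable {B W Γ : Type*} [Group W] [AddCommGroup Γ] [LinearOrder Γ] [IsOrderedAddMonoid Γ]
variable {M : CoxeterMatrix B} (cs : CoxeterSystem M W)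

lemma L_one (L : W → Γ)
    (hweight : ∀ u v : W, cs.length (u * v) = cs.length u + cs.length v →
      L (u * v) = L u + L v) : L 1 = 0 := by
  have h := hweight 1 1 (by simp)
  rw [one_mul] at h
  exact (left_eq_add.mp h).symm ▸ rfl

lemma L_nonneg (L : W → Γ)
    (hweight : ∀ u v : W, cs.length (u * v) = cs.length u + cs.length v →
      L (u * v) = L u + L v)
    (hnonneg : ∀ i : B, 0 ≤ L (cs.simple i)) : ∀ w : W, 0 ≤ L w := by
  suffices h : ∀ n (w : W), cs.length w ≤ n → 0 ≤ L w from
    fun w => h (cs.length w) w le_rfl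
  intro n
  induction n with
  | zero =>
    intro w hw
    have hone : w = 1 := cs.length_eq_zero_iff.mp (Nat.le_zero.mp hw)
    subst hone
    rw [L_one cs L hweight]
  | succ n ih =>
    intro w hw
    by_cases hone : w = 1
    · subst hone; rw [L_one cs L hweight]
    obtain ⟨j, hj⟩ := cs.exists_leftDescent_of_ne_one hone
    have hj' : cs.length (cs.simple j * w) < cs.length w := hj
    have hww : cs.simple j * (cs.simple j * w) = w := cs.simple_mul_simple_cancel_left _
    have hlen : cs.length (cs.simple j * (cs.simple j * w))
        = cs.length (cs.simple j) + cs.length (cs.simple j * w) := by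
      rw [hww, cs.length_simple]
      rcases cs.length_simple_mul w j with h | h <;> omega
    have hsum := hweight _ _ hlen
    rw [hww] at hsum
    have h2 : 0 ≤ L (cs.simple j * w) := ih _ (by omega)
    have h3 : 0 ≤ L (cs.simple j) := hnonneg j
    rw [hsum]
    exact add_nonneg h3 h2

lemma L_invariant (L : W → Γ)
    (hweight : ∀ u v : W, cs.length (u * v) = cs.length u + cs.length v →
      L (u * v) = L u + L v)
    {X : Set B} (hX : ∀ j ∈ X, L (cs.simple j) = 0) :
    ∀ g ∈ par' cs X, ∀ x : W, L (g * x) = L x := by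
  intro g hg
  refine Subgroup.closure_induction ?_ ?_ ?_ ?_ hg
  · rintro y ⟨i, hi, rfl⟩ x
    have h0 : L (cs.simple i) = 0 := hX i hi
    rcases cs.length_simple_mul x i with h | h
    · have hlen : cs.length (cs.simple i * x)
          = cs.length (cs.simple i) + cs.length x := by
        rw [cs.length_simple]; omega
      rw [hweight _ _ hlen, h0, zero_add]
    · have hxx : cs.simple i * (cs.simple i * x) = x := cs.simple_mul_simple_cancel_left _
      have hlen : cs.length (cs.simple i * (cs.simple i * x))
          = cs.length (cs.simple i) + cs.length (cs.simple i * x) := by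
        rw [hxx, cs.length_simple]
        have hne := cs.length_simple_mul_ne x i
        omega
      have hsum := hweight _ _ hlen
      rw [hxx, h0, zero_add] at hsum
      exact hsum.symm
  · intro x; rw [one_mul]
  · intro p q _ _ hp hq x
    rw [mul_assoc, hp, hq]
  · intro p _ hp x
    have h := hp (p⁻¹ * x)
    rw [mul_inv_cancel_left] at h
    exact h.symm

lemma exists_allDescent (L : W → Γ)
    (hweight : ∀ u v : W, cs.length (u * v) = cs.length u + cs.length v →
      L (u * v) = L u + L v)
    (hnonneg : ∀ i : B, 0 ≤ L (cs.simple i))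
    (I : Set B) (wI : W) (hwI2 : ∀ v ∈ par' cs I, cs.length v ≤ cs.length wI) :
    ∀ k (x : W), x ∈ par' cs I → cs.length wI - cs.length x ≤ k →
      ∃ z ∈ par' cs I, (∀ j ∈ I, cs.length (cs.simple j * z) < cs.length z) ∧ L x ≤ L z := by
  intro k
  induction k with
  | zero =>
    intro x hx hk
    by_cases hall : ∀ j ∈ I, cs.length (cs.simple j * x) < cs.length x
    · exact ⟨x, hx, hall, le_rfl⟩
    · exfalso
      push_neg at hall
      obtain ⟨j, hjI, hjnd⟩ := hall
      have hmem : cs.simple j * x ∈ par' cs I :=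
        mul_mem (Subgroup.subset_closure ⟨j, hjI, rfl⟩) hx
      have hle := hwI2 _ hmem
      have hne := cs.length_simple_mul_ne x j
      have hxle := hwI2 _ hx
      omega
  | succ k ih =>
    intro x hx hk
    by_cases hall : ∀ j ∈ I, cs.length (cs.simple j * x) < cs.length x
    · exact ⟨x, hx, hall, le_rfl⟩
    · push_neg at hall
      obtain ⟨j, hjI, hjnd⟩ := hall
      have hne := cs.length_simple_mul_ne x j
      have hasc : cs.length (cs.simple j * x) = cs.length x + 1 := by
        rcases cs.length_simple_mul x j with h | h <;> omega
      have hmem : cs.simple j * x ∈ par' cs I :=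
        mul_mem (Subgroup.subset_closure ⟨j, hjI, rfl⟩) hx
      have hlen : cs.length (cs.simple j * x)
          = cs.length (cs.simple j) + cs.length x := by
        rw [cs.length_simple]; omega
      have hL : L x ≤ L (cs.simple j * x) := by
        rw [hweight _ _ hlen]
        exact le_add_of_nonneg_left (hnonneg j)
      have hle := hwI2 _ hmem
      obtain ⟨z, hz1, hz2, hz3⟩ := ih (cs.simple j * x) hmem (by omega)
      exact ⟨z, hz1, hz2, le_trans hL hz3⟩

end Weight


lemma par_eq_par' (I : Set B) : par cs I = par' cs I := rfl

/-- Let `I ⊆ S` generate a finite parabolic subgroup `W_I`, with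
longest element `w_I`, `I° = { s ∈ I : L s = 0 }`, and let `w°_I` be the minimal-length
element of the coset `W_{I°} w_I`.  Then for every `a ∈ W_{I°}` and every `t ∈ I⁺`,
`ℓ(t · a w°_I) < ℓ(a w°_I)` (i.e. `t a w°_I < a w°_I`). -/
theorem stmt17 (L : W → Γ)
    (hweight : ∀ u v : W, cs.length (u * v) = cs.length u + cs.length v →
      L (u * v) = L u + L v)
    (hnonneg : ∀ i : B, 0 ≤ L (cs.simple i))
    (I : Set B) (hfin : ((par cs I : Set W)).Finite)
    (wI : W) (hwI : wI ∈ par cs I ∧ ∀ v ∈ par cs I, cs.length v ≤ cs.length wI)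
    (w0c : W)
    (hw0c : (∃ g ∈ par cs {i | i ∈ I ∧ L (cs.simple i) = 0}, w0c = g * wI) ∧
      ∀ g ∈ par cs {i | i ∈ I ∧ L (cs.simple i) = 0}, cs.length w0c ≤ cs.length (g * wI))
    (a : W) (ha : a ∈ par cs {i | i ∈ I ∧ L (cs.simple i) = 0})
    (i : B) (hi : i ∈ I) (hipos : 0 < L (cs.simple i)) :
    cs.length (cs.simple i * (a * w0c)) < cs.length (a * w0c) := by
  obtain ⟨hwI1, hwI2⟩ := hwI
  obtain ⟨⟨g, hg, hw0c_eq⟩, -⟩ := hw0c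
  rw [par_eq_par'] at hwI1 ha hg
  rw [show (∀ v ∈ par cs I, cs.length v ≤ cs.length wI)
      = ∀ v ∈ par' cs I, cs.length v ≤ cs.length wI from rfl] at hwI2
  by_contra hlt
  push_neg at hlt
  have hne := cs.length_simple_mul_ne (a * w0c) i
  have hdisj := cs.length_simple_mul (a * w0c) i
  have hasc : cs.length (cs.simple i * (a * w0c)) = cs.length (a * w0c) + 1 := by
    rcases hdisj with h | h <;> omega
  -- `a * w0c = (a * g) * wI` with `a * g` in the zero-weight parabolic subgroup
  have hb_mem : a * g ∈ par' cs {i | i ∈ I ∧ L (cs.simple i) = 0} := mul_mem ha hg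
  have hy : a * w0c = (a * g) * wI := by rw [hw0c_eq, ← mul_assoc]
  have hXzero : ∀ j ∈ {i | i ∈ I ∧ L (cs.simple i) = 0}, L (cs.simple j) = 0 :=
    fun j hj => hj.2
  have hLy : L (a * w0c) = L wI := by
    rw [hy]
    exact L_invariant cs L hweight hXzero (a * g) hb_mem wI
  have hLxstar : L (cs.simple i * (a * w0c)) = L (cs.simple i) + L (a * w0c) := by
    apply hweight
    rw [cs.length_simple]
    omega
  -- `s_i * (a * w0c)` lies in `W_I`
  have hsub : par' cs {i | i ∈ I ∧ L (cs.simple i) = 0} ≤ par' cs I :=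
    Subgroup.closure_mono (Set.image_mono fun j hj => hj.1)
  have hxstar_mem : cs.simple i * (a * w0c) ∈ par' cs I := by
    refine mul_mem (Subgroup.subset_closure ⟨i, hi, rfl⟩) ?_
    rw [hy]
    exact mul_mem (hsub hb_mem) hwI1
  -- greedily ascend to an element all of whose `I`-descents are descents
  obtain ⟨z, hzmem, hzdesc, hzL⟩ :=
    exists_allDescent cs L hweight hnonneg I wI hwI2 (cs.length wI)
      (cs.simple i * (a * w0c)) hxstar_mem (by omega)
  have hz_eq : z = wI := allDescent_eq cs I wI hwI1 hwI2 hzmem hzdesc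
  rw [hz_eq, hLxstar, hLy] at hzL
  have hle : L (cs.simple i) ≤ 0 := add_le_iff_nonpos_left.mp hzL
  exact absurd hipos (not_lt.mpr hle)

end Stmt17
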